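/- Let Q be a preorder, κ an ordinal, (q_ε)_{ε < κ} a family of elements of Q, P a preorder, and R : Q → P → Prop a relation satisfying: if R(q, r) and r ≤ r' then R(q, r'). For r ∈ P let (α_r, η_r) be the canonical sequence of r, i.e. the unique ordinal α_r and function η_r on {β : β < α_r} such that for every β < α_r, η_r(β) is the least ε < κ with R(q_ε, r) and q_ε incompatible with q_{η_r(γ)} for all γ < β, and no ε < κ satisfies this condition at stage α_r. Then for all r₁, r₂ ∈ P with r₁ ≤ r₂, either α_{r₁} ≤ α_{r₂} and η_{r₂} restricted to {β : β < α_{r₁}} equals η_{r₁}, or there exists β < min(α_{r₁}, α_{r₂}) such that η_{r₁} and η_{r₂} agree on {γ : γ < β} and η_{r₂}(β) < η_{r₁}(β). -/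
import Mathlib


/-- `CanonSpec κ q R r α η` says that `(α, η)` is the canonical sequence of `r`
(⊛₁ in the proof of Claim 3.3): for each `β < α`, `η β` is the least `ε < κ`
such that `R (q ε) r` holds and `q ε` is incompatible with `q (η γ)` for all
`γ < β`, and no `ε < κ` satisfies this condition at stage `α`. -/
def CanonSpec {Q P : Type*} [Preorder Q] (κ : Ordinal) (q : Ordinal → Q)
    (R : Q → P → Prop) (r : P) (α : Ordinal) (η : Ordinal → Ordinal) : Prop :=
  (∀ β : Ordinal, β < α →
    IsLeast {ε : Ordinal | ε < κ ∧ R (q ε) r ∧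
      ∀ γ : Ordinal, γ < β → ¬∃ z, q ε ≤ z ∧ q (η γ) ≤ z} (η β)) ∧
  ¬∃ ε : Ordinal, ε < κ ∧ R (q ε) r ∧
      ∀ γ : Ordinal, γ < α → ¬∃ z, q ε ≤ z ∧ q (η γ) ≤ z

/-- ⊛₃ in the proof of Claim 3.3: if `R` is monotone in its second argument and
`r₁ ≤ r₂`, then the canonical sequence of `r₂` either end-extends that of `r₁`
or is lexicographically smaller at the first point of difference. -/
theorem stmt8 {Q P : Type*} [Preorder Q] [Preorder P] (κ : Ordinal)
    (q : Ordinal → Q) (R : Q → P → Prop)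
    (hmono : ∀ qq : Q, ∀ r r' : P, R qq r → r ≤ r' → R qq r')
    (r₁ r₂ : P) (hr : r₁ ≤ r₂)
    (α₁ α₂ : Ordinal) (η₁ η₂ : Ordinal → Ordinal)
    (h₁ : CanonSpec κ q R r₁ α₁ η₁) (h₂ : CanonSpec κ q R r₂ α₂ η₂) :
    (α₁ ≤ α₂ ∧ ∀ β : Ordinal, β < α₁ → η₂ β = η₁ β) ∨
    (∃ β : Ordinal, β < min α₁ α₂ ∧
      (∀ γ : Ordinal, γ < β → η₁ γ = η₂ γ) ∧ η₂ β < η₁ β) := by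
  classical
  by_cases hS : ∃ β, β < min α₁ α₂ ∧ η₁ β ≠ η₂ β
  · -- least point of disagreement
    obtain ⟨β, ⟨hβmin, hβne⟩, hmin⟩ := wellFounded_lt.has_min
      {β | β < min α₁ α₂ ∧ η₁ β ≠ η₂ β} hS
    have hagree : ∀ γ, γ < β → η₁ γ = η₂ γ := by
      intro γ hγ
      by_contra hne
      exact hmin γ ⟨hγ.trans hβmin, hne⟩ hγ
    have hβ₁ : β < α₁ := hβmin.trans_le (min_le_left _ _)
    have hβ₂ : β < α₂ := hβmin.trans_le (min_le_right _ _)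
    obtain ⟨⟨hlt, hR, hinc⟩, -⟩ := h₁.1 β hβ₁
    have hmem : η₁ β ∈ {ε : Ordinal | ε < κ ∧ R (q ε) r₂ ∧
        ∀ γ : Ordinal, γ < β → ¬∃ z, q ε ≤ z ∧ q (η₂ γ) ≤ z} := by
      refine ⟨hlt, hmono _ _ _ hR hr, fun γ hγ => ?_⟩
      rw [← hagree γ hγ]; exact hinc γ hγ
    have hle := (h₂.1 β hβ₂).2 hmem
    exact Or.inr ⟨β, hβmin, hagree, lt_of_le_of_ne hle (Ne.symm hβne)⟩
  · push_neg at hS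
    -- full agreement below min; show α₁ ≤ α₂
    rcases le_or_gt α₁ α₂ with h | h
    · refine Or.inl ⟨h, fun β hβ => ?_⟩
      exact (hS β (lt_min hβ (hβ.trans_le h))).symm
    · exfalso
      have hagree : ∀ γ, γ < α₂ → η₁ γ = η₂ γ := fun γ hγ =>
        hS γ (lt_min (hγ.trans h) hγ)
      obtain ⟨⟨hlt, hR, hinc⟩, -⟩ := h₁.1 α₂ h
      refine h₂.2 ⟨η₁ α₂, hlt, hmono _ _ _ hR hr, fun γ hγ => ?_⟩
      rw [← hagree γ hγ]; exact hinc γ hγ
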